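/- Let A be a finite alphabet, G a finite group, and η : A* → G a morphism. Let L' = η^{-1}(1_G). Define on A* the relation u ⪯ v iff v ∈ ↑_{L'} u, where for u = a_1⋯a_n, ↑_{L'} u = L' a_1 L' a_2 ⋯ a_n L'. Then ⪯ is transitive. -/

import Mathlib

/-- The marked product `↑_L w = L a₁ L a₂ ⋯ aₙ L` for `w = a₁ ⋯ aₙ`. -/
def markedProd {A : Type*} (L : Set (List A)) : List A → Set (List A)
  | [] => L
  | a :: w => {v | ∃ x y, x ∈ L ∧ y ∈ markedProd L w ∧ v = x ++ a :: y}

lemma markedProd_eta {A : Type*} {G : Type*} [Group G]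
    (η : List A → G) (hηm : ∀ u v : List A, η (u ++ v) = η u * η v) :
    ∀ v w : List A, w ∈ markedProd {x : List A | η x = 1} v → η w = η v := by
  intro v
  induction v with
  | nil =>
    intro w hw
    have h0 : η ([] : List A) = 1 := by
      have h := hηm [] []
      simp only [List.append_nil] at h
      exact left_eq_mul.mp h
    rw [h0]; exact hw
  | cons a v ih =>
    rintro w ⟨x, y, hx, hy, rfl⟩
    have : η (a :: y) = η (a :: v) := by
      have h1 := hηm [a] y
      have h2 := hηm [a] v
      simp only [List.singleton_append] at h1 h2
      rw [h1, h2, ih y hy]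
    rw [hηm, hx, one_mul, this]

lemma markedProd_split {A : Type*} (L : Set (List A)) (hL : [] ∈ L) :
    ∀ s t w : List A, w ∈ markedProd L (s ++ t) →
      ∃ w1 w2, w1 ∈ markedProd L s ∧ w2 ∈ markedProd L t ∧ w = w1 ++ w2 := by
  intro s
  induction s with
  | nil => intro t w hw; exact ⟨[], w, hL, hw, rfl⟩
  | cons a s ih =>
    rintro t w ⟨x, y, hx, hy, rfl⟩
    obtain ⟨y1, y2, hy1, hy2, rfl⟩ := ih t y hy
    exact ⟨x ++ a :: y1, y2, ⟨x, y1, hx, hy1, rfl⟩, hy2, by simp⟩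

theorem markedProd_rel_trans (A : Type*) [Fintype A] (G : Type*) [Group G] [Fintype G]
    (η : List A → G) (hη1 : η [] = 1) (hηm : ∀ u v : List A, η (u ++ v) = η u * η v)
    (u v w : List A)
    (huv : v ∈ markedProd {x : List A | η x = 1} u)
    (hvw : w ∈ markedProd {x : List A | η x = 1} v) :
    w ∈ markedProd {x : List A | η x = 1} u := by
  induction u generalizing v w with
  | nil =>
    show η w = 1
    rw [markedProd_eta η hηm v w hvw]; exact huv
  | cons a u ih =>
    obtain ⟨x, y, hx, hy, rfl⟩ := huv
    obtain ⟨w1, w2, hw1, hw2, rfl⟩ := markedProd_split _ hη1 x (a :: y) w hvw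
    obtain ⟨p, q, hp, hq, rfl⟩ := hw2
    refine ⟨w1 ++ p, q, ?_, ih y q hy hq, by simp⟩
    show η (w1 ++ p) = 1
    rw [hηm, hp, mul_one, markedProd_eta η hηm x w1 hw1]; exact hx
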